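/- Let δ ≥ 3, s and n be integers with 1 ≤ s ≤ δ − 1 and n ≥ ((δ−2)s+2)(δ+1−s) + s. Then the spectral radius of the graph G₃ = K_s ∨ (K_{n−s−((δ−2)s+1)(δ+1−s)} ∪ ((δ−2)s+1)K_{δ+1−s}) equals the largest real root of the cubic polynomial φ(x) = x³ + ((−δ+2)s² + (δ²−δ−2)s − n + 3)x² + ((δ²−3δ+2)s² − (n + δ³ − 2δ² − 2δ + 1)s + δn − n − δ² − 2δ + 2)x + ((2−δ)s³ + (δ²−δ−3)s² + δs + δ)n − (δ−2)²s⁵ + (2δ³−6δ²−δ+10)s⁴ − (δ⁴−2δ³−6δ²+7δ+10)s³ − (2δ³−δ²−5δ−5)s² − (δ³−δ)s − δ² − 2δ. -/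

import Mathlib

open Finset

/-- The spectral radius of a finite simple graph: the largest eigenvalue of its
adjacency matrix (over `ℝ`). -/
noncomputable def specRad {V : Type*} [Fintype V] (G : SimpleGraph V) : ℝ :=
  letI := Classical.decEq V
  letI := Classical.decRel G.Adj
  sSup (spectrum ℝ (G.adjMatrix ℝ))

/-- `joinCliques s t f` is the graph `K_s ∨ (K_{f 0} ∪ K_{f 1} ∪ ⋯ ∪ K_{f (t-1)})`. -/
def joinCliques (s t : ℕ) (f : Fin t → ℕ) :
    SimpleGraph (Fin s ⊕ (Σ i : Fin t, Fin (f i))) where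
  Adj x y := x ≠ y ∧ ∀ a b, x = Sum.inr a → y = Sum.inr b → a.1 = b.1
  symm := ⟨fun _x _y h => ⟨h.1.symm, fun a b hy hx => (h.2 b a hx hy).symm⟩⟩
  loopless := ⟨fun _x h => h.1 rfl⟩

/-- `gJoin s m t p` is the graph `K_s ∨ (K_m ∪ t·K_p)`. -/
def gJoin (s m t p : ℕ) :=
  joinCliques s (t + 1) (Fin.cons m fun _ => p)

section Gen
variable {S T : ℕ} {f : Fin T → ℕ}

lemma adj_iff (x y : Fin S ⊕ (Σ i : Fin T, Fin (f i))) :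
    (joinCliques S T f).Adj x y ↔ x ≠ y ∧ ∀ a b, x = Sum.inr a → y = Sum.inr b → a.1 = b.1 :=
  Iff.rfl

lemma adj_inl_inl (j j' : Fin S) :
    (joinCliques S T f).Adj (Sum.inl j) (Sum.inl j') ↔ ¬ j' = j := by
  rw [adj_iff]
  constructor
  · rintro ⟨h, -⟩
    rintro rfl
    exact h rfl
  · intro h
    refine ⟨fun hc => h (Sum.inl_injective hc).symm, fun a b ha => by simp at ha⟩

lemma adj_inl_inr (j : Fin S) (a : Σ i : Fin T, Fin (f i)) :
    (joinCliques S T f).Adj (Sum.inl j) (Sum.inr a) := by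
  rw [adj_iff]
  exact ⟨by simp, fun a b ha => by simp at ha⟩

lemma adj_inr_inl (j : Fin S) (a : Σ i : Fin T, Fin (f i)) :
    (joinCliques S T f).Adj (Sum.inr a) (Sum.inl j) :=
  ((joinCliques S T f).adj_symm (adj_inl_inr j a))

lemma adj_inr_inr (a b : Σ i : Fin T, Fin (f i)) :
    (joinCliques S T f).Adj (Sum.inr a) (Sum.inr b) ↔ ¬ a = b ∧ a.1 = b.1 := by
  rw [adj_iff]
  constructor
  · rintro ⟨h, h2⟩
    exact ⟨fun hc => h (by rw [hc]), h2 a b rfl rfl⟩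
  · rintro ⟨h1, h2⟩
    refine ⟨fun hc => h1 (Sum.inr_injective hc), fun a' b' ha hb => ?_⟩
    rw [Sum.inr.injEq] at ha hb
    rw [← ha, ← hb]; exact h2

lemma sum_ite_ne {α : Type*} [Fintype α] [DecidableEq α] (F : α → ℝ) (j : α) :
    ∑ x, (if x = j then 0 else F x) = (∑ x, F x) - F j := by
  have h1 : ∑ x, (if x = j then F x else 0) = F j := by
    rw [Finset.sum_ite_eq' Finset.univ j F]; simp
  have h2 : ∑ x, ((if x = j then 0 else F x) + (if x = j then F x else 0)) = ∑ x, F x := by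
    apply Finset.sum_congr rfl; intro x _; by_cases h : x = j <;> simp [h]
  rw [Finset.sum_add_distrib, h1] at h2
  linarith

variable [DecidableRel (joinCliques S T f).Adj]

lemma mulVec_inl (v : (Fin S ⊕ (Σ i : Fin T, Fin (f i))) → ℝ) (j : Fin S) :
    ((joinCliques S T f).adjMatrix ℝ).mulVec v (Sum.inl j)
      = ((∑ j', v (Sum.inl j')) - v (Sum.inl j)) + ∑ a : Σ i : Fin T, Fin (f i), v (Sum.inr a) := by
  classical
  rw [Matrix.mulVec, dotProduct,
    Fintype.sum_sum_type (f := fun w => ((joinCliques S T f).adjMatrix ℝ) (Sum.inl j) w * v w)]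
  congr 1
  · rw [← sum_ite_ne (fun j' => v (Sum.inl j')) j]
    apply Finset.sum_congr rfl; intro j' _
    by_cases h : j' = j
    · simp [SimpleGraph.adjMatrix_apply, adj_inl_inl, h]
    · simp [SimpleGraph.adjMatrix_apply, adj_inl_inl, h]
  · apply Finset.sum_congr rfl; intro a _
    simp [SimpleGraph.adjMatrix_apply, adj_inl_inr]

lemma mulVec_inr (v : (Fin S ⊕ (Σ i : Fin T, Fin (f i))) → ℝ) (i : Fin T) (k : Fin (f i)) :
    ((joinCliques S T f).adjMatrix ℝ).mulVec v (Sum.inr ⟨i, k⟩)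
      = (∑ j', v (Sum.inl j')) + ((∑ k' : Fin (f i), v (Sum.inr ⟨i, k'⟩)) - v (Sum.inr ⟨i, k⟩)) := by
  classical
  rw [Matrix.mulVec, dotProduct,
    Fintype.sum_sum_type (f := fun w => ((joinCliques S T f).adjMatrix ℝ) (Sum.inr ⟨i, k⟩) w * v w)]
  congr 1
  · apply Finset.sum_congr rfl; intro j' _
    simp [SimpleGraph.adjMatrix_apply, adj_inr_inl]
  · rw [← Finset.univ_sigma_univ, Finset.sum_sigma]
    rw [Finset.sum_eq_single i]
    · rw [← sum_ite_ne (fun k' => v (Sum.inr ⟨i, k'⟩)) k]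
      apply Finset.sum_congr rfl; intro k' _
      by_cases h : k' = k
      · subst h; simp [SimpleGraph.adjMatrix_apply, adj_inr_inr]
      · have hne : ¬ (⟨i, k⟩ : Σ i : Fin T, Fin (f i)) = ⟨i, k'⟩ := by
          intro hc
          exact h (eq_of_heq (Sigma.mk.inj_iff.mp hc).2).symm
        simp [SimpleGraph.adjMatrix_apply, adj_inr_inr, hne, h]
    · intro i' _ hi'
      apply Finset.sum_eq_zero; intro k' _
      have : ¬ (joinCliques S T f).Adj (Sum.inr ⟨i, k⟩) (Sum.inr ⟨i', k'⟩) := by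
        rw [adj_inr_inr]
        rintro ⟨-, h2⟩
        exact hi' (h2.symm)
      simp [SimpleGraph.adjMatrix_apply, this]
    · simp

end Gen

/-- the block sizes of `gJoin`. -/
abbrev bl (m t p : ℕ) : Fin (t+1) → ℕ := Fin.cons m fun _ => p

@[simp] lemma bl_zero (m t p : ℕ) : bl m t p 0 = m := rfl
@[simp] lemma bl_succ (m t p : ℕ) (i : Fin t) : bl m t p i.succ = p := by
  simp [bl]

section GJ
variable {S m t p : ℕ} [inst : DecidableRel (gJoin S m t p).Adj]

lemma gJoin_mulVec_inl (v : (Fin S ⊕ (Σ i : Fin (t+1), Fin (bl m t p i))) → ℝ)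
    (j : Fin S) :
    ((gJoin S m t p).adjMatrix ℝ).mulVec v (Sum.inl j)
      = ((∑ j', v (Sum.inl j')) - v (Sum.inl j))
        + ∑ a : Σ i : Fin (t+1), Fin (bl m t p i), v (Sum.inr a) := by
  letI : DecidableRel (joinCliques S (t+1) (bl m t p)).Adj := inst
  exact mulVec_inl v j

lemma gJoin_mulVec_inr (v : (Fin S ⊕ (Σ i : Fin (t+1), Fin (bl m t p i))) → ℝ)
    (i : Fin (t+1)) (k : Fin (bl m t p i)) :
    ((gJoin S m t p).adjMatrix ℝ).mulVec v (Sum.inr ⟨i, k⟩)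
      = (∑ j', v (Sum.inl j'))
        + ((∑ k' : Fin (bl m t p i), v (Sum.inr ⟨i, k'⟩)) - v (Sum.inr ⟨i, k⟩)) := by
  letI : DecidableRel (joinCliques S (t+1) (bl m t p)).Adj := inst
  exact mulVec_inr v i k

end GJ

lemma mem_spectrum_iff_eig {V : Type*} [Fintype V] [DecidableEq V] (A : Matrix V V ℝ) (x : ℝ) :
    x ∈ spectrum ℝ A ↔ ∃ v, v ≠ 0 ∧ A.mulVec v = x • v := by
  rw [spectrum.mem_iff, Algebra.algebraMap_eq_smul_one,
    Matrix.isUnit_iff_isUnit_det, isUnit_iff_ne_zero, not_ne_iff,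
    ← Matrix.exists_mulVec_eq_zero_iff]
  constructor
  · rintro ⟨v, hv, h⟩
    refine ⟨v, hv, ?_⟩
    rw [Matrix.sub_mulVec, Matrix.smul_mulVec, Matrix.one_mulVec, sub_eq_zero] at h
    exact h.symm
  · rintro ⟨v, hv, h⟩
    refine ⟨v, hv, ?_⟩
    rw [Matrix.sub_mulVec, Matrix.smul_mulVec, Matrix.one_mulVec, sub_eq_zero, h]

/-- `x • 1 - B` for the quotient matrix `B` of the partition of `gJoin`. -/
noncomputable def Mq (S m t p : ℕ) (x : ℝ) : Matrix (Fin 3) (Fin 3) ℝ :=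
  !![x - ((S:ℝ)-1), 0 - (m:ℝ), 0 - (t:ℝ)*(p:ℝ);
     0 - (S:ℝ), x - ((m:ℝ)-1), 0;
     0 - (S:ℝ), 0, x - ((p:ℝ)-1)]

lemma det_Mq (S m t p : ℕ) (x : ℝ) :
    (Mq S m t p x).det
      = (x-((S:ℝ)-1))*((x-((m:ℝ)-1))*(x-((p:ℝ)-1)))
        - (m:ℝ)*(S:ℝ)*(x-((p:ℝ)-1)) - (t:ℝ)*(p:ℝ)*(S:ℝ)*(x-((m:ℝ)-1)) := by
  rw [Matrix.det_fin_three]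
  rw [show Mq S m t p x 0 0 = x - ((S:ℝ)-1) from rfl,
      show Mq S m t p x 0 1 = 0 - (m:ℝ) from rfl,
      show Mq S m t p x 0 2 = 0 - (t:ℝ)*(p:ℝ) from rfl,
      show Mq S m t p x 1 0 = 0 - (S:ℝ) from rfl,
      show Mq S m t p x 1 1 = x - ((m:ℝ)-1) from rfl,
      show Mq S m t p x 1 2 = 0 from rfl,
      show Mq S m t p x 2 0 = 0 - (S:ℝ) from rfl,
      show Mq S m t p x 2 1 = 0 from rfl,
      show Mq S m t p x 2 2 = x - ((p:ℝ)-1) from rfl]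
  ring

section Spec
variable {S m t p : ℕ} [inst : DecidableRel (gJoin S m t p).Adj]
variable [instE : DecidableEq (Fin S ⊕ (Σ i : Fin (t+1), Fin (bl m t p i)))]

/-- lifting a quotient eigenvector to the graph -/
lemma lift_eig (hS : 1 ≤ S) (hm : 1 ≤ m) (ht : 1 ≤ t) (hp : 1 ≤ p) {x : ℝ}
    (hdet : (Mq S m t p x).det = 0) :
    x ∈ spectrum ℝ ((gJoin S m t p).adjMatrix ℝ) := by
  obtain ⟨w, hw, hmv⟩ := (Matrix.exists_mulVec_eq_zero_iff).mpr hdet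
  have e0 := congrFun hmv 0
  have e1 := congrFun hmv 1
  have e2 := congrFun hmv 2
  simp only [Mq, Matrix.mulVec, dotProduct, Fin.sum_univ_three,
    Matrix.cons_val', Matrix.cons_val_zero, Matrix.cons_val_one, Matrix.head_cons,
    Matrix.empty_val', Matrix.cons_val_fin_one, Matrix.head_fin_const,
    Matrix.cons_val_two, Matrix.tail_cons, Pi.zero_apply, Matrix.of_apply] at e0 e1 e2
  set v : (Fin S ⊕ (Σ i : Fin (t+1), Fin (bl m t p i))) → ℝ :=
    Sum.elim (fun _ => w 0) (fun a => if a.1 = 0 then w 1 else w 2) with hv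
  have hSL : (∑ j' : Fin S, v (Sum.inl j')) = (S:ℝ) * w 0 := by
    simp [hv, Finset.sum_const, Finset.card_univ, nsmul_eq_mul]
  have hSB0 : (∑ k' : Fin (bl m t p (0 : Fin (t+1))),
      v (Sum.inr ⟨0, k'⟩)) = (m:ℝ) * w 1 := by
    simp [hv, Finset.sum_const, Finset.card_univ, nsmul_eq_mul]
    left; exact Finset.card_fin _
  have hSBs : ∀ i' : Fin t, (∑ k' : Fin (bl m t p i'.succ),
      v (Sum.inr ⟨i'.succ, k'⟩)) = (p:ℝ) * w 2 := by
    intro i'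
    simp [hv, Finset.sum_const, Finset.card_univ, nsmul_eq_mul, Fin.succ_ne_zero]
  have hSR : (∑ a : Σ i : Fin (t+1), Fin (bl m t p i), v (Sum.inr a))
      = (m:ℝ) * w 1 + (t:ℝ) * ((p:ℝ) * w 2) := by
    rw [← Finset.univ_sigma_univ, Finset.sum_sigma, Fin.sum_univ_succ]
    rw [hSB0]
    congr 1
    rw [Finset.sum_congr rfl (fun i' _ => hSBs i'), Finset.sum_const, Finset.card_univ]
    simp [nsmul_eq_mul]
  refine (mem_spectrum_iff_eig _ x).mpr ⟨v, ?_, ?_⟩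
  · -- v ≠ 0
    obtain ⟨j, hj⟩ := Function.ne_iff.mp hw
    intro hv0
    fin_cases j
    · exact hj (by simpa [hv] using congrFun hv0 (Sum.inl ⟨0, hS⟩))
    · have hk : 0 < bl m t p (0 : Fin (t+1)) := by show 0 < m; omega
      exact hj (by simpa [hv] using congrFun hv0 (Sum.inr ⟨0, ⟨0, hk⟩⟩))
    · have hk : 0 < bl m t p (Fin.succ (⟨0, ht⟩ : Fin t)) := by show 0 < p; omega
      have := congrFun hv0 (Sum.inr ⟨Fin.succ (⟨0, ht⟩ : Fin t), ⟨0, hk⟩⟩)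
      simp [hv, Fin.succ_ne_zero] at this
      exact hj this
  · funext u
    cases u with
    | inl j =>
      rw [gJoin_mulVec_inl, hSL, hSR]
      simp only [hv, Sum.elim_inl, Pi.smul_apply, smul_eq_mul]
      linear_combination -e0
    | inr a =>
      obtain ⟨i, k⟩ := a
      rw [gJoin_mulVec_inr, hSL]
      rcases Fin.eq_zero_or_eq_succ i with rfl | ⟨i', rfl⟩
      · rw [hSB0]
        simp only [hv, Sum.elim_inr, Pi.smul_apply, smul_eq_mul, if_pos rfl, if_true]
        linear_combination -e1
      · rw [hSBs i']
        simp only [hv, Sum.elim_inr, Pi.smul_apply, smul_eq_mul,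
          if_neg (Fin.succ_ne_zero i')]
        linear_combination -e2

/-- an eigenvalue different from `-1` and `p-1` is a root of the quotient polynomial -/
lemma eig_quot {x : ℝ} (hx1 : x ≠ -1) (hxp : x ≠ (p:ℝ) - 1)
    (hmem : x ∈ spectrum ℝ ((gJoin S m t p).adjMatrix ℝ)) :
    (Mq S m t p x).det = 0 := by
  obtain ⟨v, hv, heig⟩ := (mem_spectrum_iff_eig _ x).mp hmem
  have hx1' : x + 1 ≠ 0 := fun h => hx1 (by linarith)
  have hxp' : x - ((p:ℝ) - 1) ≠ 0 := sub_ne_zero.mpr hxp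
  set SL : ℝ := ∑ j' : Fin S, v (Sum.inl j') with hSLdef
  set SR : ℝ := ∑ a : Σ i : Fin (t+1), Fin (bl m t p i), v (Sum.inr a) with hSRdef
  set SB : Fin (t+1) → ℝ :=
    fun i => ∑ k' : Fin (bl m t p i), v (Sum.inr ⟨i, k'⟩) with hSBdef
  set a : ℝ := (SL + SR) / (x+1) with ha
  set β : Fin (t+1) → ℝ := fun i => (SL + SB i) / (x+1) with hβ
  set cc : ℝ := (S:ℝ) * a / (x - ((p:ℝ)-1)) with hcc
  have hvj : ∀ j, v (Sum.inl j) = a := by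
    intro j
    have h := congrFun heig (Sum.inl j)
    rw [gJoin_mulVec_inl] at h
    simp only [Pi.smul_apply, smul_eq_mul] at h
    rw [ha, eq_div_iff hx1']
    rw [← hSLdef, ← hSRdef] at h
    linear_combination -h
  have hvik : ∀ (i : Fin (t+1)) (k : Fin (bl m t p i)),
      v (Sum.inr ⟨i, k⟩) = β i := by
    intro i k
    have h := congrFun heig (Sum.inr ⟨i, k⟩)
    rw [gJoin_mulVec_inr] at h
    simp only [Pi.smul_apply, smul_eq_mul] at h
    rw [hβ]
    rw [eq_div_iff hx1']
    rw [← hSLdef] at h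
    have hsb : (∑ k' : Fin (bl m t p i), v (Sum.inr ⟨i, k'⟩)) = SB i := rfl
    rw [hsb] at h
    linear_combination -h
  have hSL : SL = (S:ℝ) * a := by
    rw [hSLdef, Finset.sum_congr rfl (fun j _ => hvj j), Finset.sum_const, Finset.card_univ]
    simp [nsmul_eq_mul]
  have hSB : ∀ i, SB i = ((bl m t p i : ℕ) : ℝ) * β i := by
    intro i
    rw [hSBdef]
    simp only
    rw [Finset.sum_congr rfl (fun k _ => hvik i k), Finset.sum_const, Finset.card_univ]
    simp [nsmul_eq_mul]
  have hblock : ∀ i, (x+1) * β i = SL + ((bl m t p i : ℕ) : ℝ) * β i := by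
    intro i
    rw [hβ]
    simp only
    rw [mul_comm, div_mul_cancel₀ _ hx1', ← hSB i]
  have hβs : ∀ i' : Fin t, β i'.succ = cc := by
    intro i'
    have h := hblock i'.succ
    rw [bl_succ, hSL] at h
    rw [hcc, eq_div_iff hxp']
    linear_combination h
  have hβ0m : (x+1) * β 0 = (S:ℝ) * a + (m:ℝ) * β 0 := by
    have h := hblock 0
    rw [bl_zero, hSL] at h
    exact h
  have hSR : SR = (m:ℝ) * β 0 + (t:ℝ) * ((p:ℝ) * cc) := by
    rw [hSRdef, ← Finset.univ_sigma_univ, Finset.sum_sigma, Fin.sum_univ_succ]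
    have h0 : (∑ k' : Fin (bl m t p (0 : Fin (t+1))), v (Sum.inr ⟨0, k'⟩))
        = (m:ℝ) * β 0 := by
      have := hSB 0
      rw [bl_zero] at this
      exact this
    rw [h0]
    congr 1
    have hs : ∀ i' : Fin t, (∑ k' : Fin (bl m t p (Fin.succ i')),
        v (Sum.inr ⟨Fin.succ i', k'⟩)) = (p:ℝ) * cc := by
      intro i'
      have := hSB i'.succ
      rw [bl_succ, hβs i'] at this
      exact this
    rw [Finset.sum_congr rfl (fun i' _ => hs i'), Finset.sum_const, Finset.card_univ]
    simp [nsmul_eq_mul]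
  have Ea : (x+1) * a = (S:ℝ) * a + ((m:ℝ) * β 0 + (t:ℝ) * ((p:ℝ) * cc)) := by
    calc (x+1) * a = SL + SR := by rw [ha, mul_comm, div_mul_cancel₀ _ hx1']
    _ = (S:ℝ) * a + ((m:ℝ) * β 0 + (t:ℝ) * ((p:ℝ) * cc)) := by rw [hSL, hSR]
  have Ec : (x - ((p:ℝ)-1)) * cc = (S:ℝ) * a := by
    rw [hcc, mul_comm, div_mul_cancel₀ _ hxp']
  -- the quotient eigenvector
  have hwne : ¬ (a = 0 ∧ β 0 = 0 ∧ cc = 0) := by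
    rintro ⟨ha0, hb0, hc0⟩
    apply hv
    funext u
    cases u with
    | inl j => simpa [ha0] using hvj j
    | inr q =>
      obtain ⟨i, k⟩ := q
      rw [hvik i k]
      rcases Fin.eq_zero_or_eq_succ i with rfl | ⟨i', rfl⟩
      · simpa using hb0
      · rw [hβs i']
        simpa using hc0
  rw [← Matrix.exists_mulVec_eq_zero_iff]
  refine ⟨![a, β 0, cc], ?_, ?_⟩
  · intro h
    exact hwne ⟨congrFun h 0, congrFun h 1, congrFun h 2⟩
  · funext j
    fin_cases j
    · show (Mq S m t p x).mulVec ![a, β 0, cc] 0 = 0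
      simp only [Mq, Matrix.mulVec, dotProduct, Fin.sum_univ_three,
        Matrix.cons_val', Matrix.cons_val_zero, Matrix.cons_val_one, Matrix.head_cons,
        Matrix.empty_val', Matrix.cons_val_fin_one, Matrix.head_fin_const,
        Matrix.cons_val_two, Matrix.tail_cons, Matrix.of_apply]
      linear_combination Ea
    · show (Mq S m t p x).mulVec ![a, β 0, cc] 1 = 0
      simp only [Mq, Matrix.mulVec, dotProduct, Fin.sum_univ_three,
        Matrix.cons_val', Matrix.cons_val_zero, Matrix.cons_val_one, Matrix.head_cons,
        Matrix.empty_val', Matrix.cons_val_fin_one, Matrix.head_fin_const,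
        Matrix.cons_val_two, Matrix.tail_cons, Matrix.of_apply]
      linear_combination hβ0m
    · show (Mq S m t p x).mulVec ![a, β 0, cc] 2 = 0
      simp only [Mq, Matrix.mulVec, dotProduct, Fin.sum_univ_three,
        Matrix.cons_val', Matrix.cons_val_zero, Matrix.cons_val_one, Matrix.head_cons,
        Matrix.empty_val', Matrix.cons_val_fin_one, Matrix.head_fin_const,
        Matrix.cons_val_two, Matrix.tail_cons, Matrix.of_apply]
      linear_combination Ec

end Spec

theorem stmt_12 (δ s n : ℕ) (hδ : 3 ≤ δ) (hs₁ : 1 ≤ s) (hs₂ : s ≤ δ - 1)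
    (hn : ((δ - 2) * s + 2) * (δ + 1 - s) + s ≤ n)
    (φ : ℝ → ℝ)
    (hφ : φ = fun x =>
      x ^ 3
        + ((-(δ : ℝ) + 2) * s ^ 2 + ((δ : ℝ) ^ 2 - (δ : ℝ) - 2) * s - (n : ℝ) + 3) * x ^ 2
        + (((δ : ℝ) ^ 2 - 3 * (δ : ℝ) + 2) * s ^ 2
            - ((n : ℝ) + (δ : ℝ) ^ 3 - 2 * (δ : ℝ) ^ 2 - 2 * (δ : ℝ) + 1) * s
            + (δ : ℝ) * n - (n : ℝ) - (δ : ℝ) ^ 2 - 2 * (δ : ℝ) + 2) * x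
        + ((2 - (δ : ℝ)) * s ^ 3 + ((δ : ℝ) ^ 2 - (δ : ℝ) - 3) * s ^ 2
            + (δ : ℝ) * s + (δ : ℝ)) * n
        - ((δ : ℝ) - 2) ^ 2 * s ^ 5
        + (2 * (δ : ℝ) ^ 3 - 6 * (δ : ℝ) ^ 2 - (δ : ℝ) + 10) * s ^ 4
        - ((δ : ℝ) ^ 4 - 2 * (δ : ℝ) ^ 3 - 6 * (δ : ℝ) ^ 2 + 7 * (δ : ℝ) + 10) * s ^ 3
        - (2 * (δ : ℝ) ^ 3 - (δ : ℝ) ^ 2 - 5 * (δ : ℝ) - 5) * s ^ 2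
        - ((δ : ℝ) ^ 3 - (δ : ℝ)) * s - (δ : ℝ) ^ 2 - 2 * (δ : ℝ)) :
    φ (specRad (gJoin s (n - s - ((δ - 2) * s + 1) * (δ + 1 - s))
        ((δ - 2) * s + 1) (δ + 1 - s))) = 0 ∧
      ∀ x : ℝ, φ x = 0 →
        x ≤ specRad (gJoin s (n - s - ((δ - 2) * s + 1) * (δ + 1 - s))
          ((δ - 2) * s + 1) (δ + 1 - s)) := by
  set tt : ℕ := (δ - 2) * s + 1 with htt
  set pp : ℕ := δ + 1 - s with hpp
  set q : ℕ := tt * pp with hq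
  set mm : ℕ := n - s - q with hmm
  -- basic arithmetic facts
  have h2δ : 2 ≤ δ := by omega
  have hpp2 : 2 ≤ pp := by omega
  have hts : 1 ≤ (δ - 2) * s := Nat.mul_pos (by omega) hs₁
  have htt2 : 2 ≤ tt := by omega
  have hnq : q + pp + s ≤ n := by
    have h1 : tt * pp + pp = ((δ - 2) * s + 2) * pp := by rw [htt]; ring
    have := hn
    omega
  have hmge : pp ≤ mm := by omega
  have hm1 : 1 ≤ mm := by omega
  -- cast facts
  have hcpp : ((pp : ℕ) : ℝ) = (δ : ℝ) + 1 - (s : ℝ) := by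
    rw [hpp, Nat.cast_sub (by omega : s ≤ δ + 1)]
    push_cast; ring
  have hctt : ((tt : ℕ) : ℝ) = ((δ : ℝ) - 2) * (s : ℝ) + 1 := by
    rw [htt]
    push_cast [Nat.cast_sub h2δ]; ring
  have hcmm : ((mm : ℕ) : ℝ) = (n : ℝ) - (s : ℝ) - (tt : ℝ) * (pp : ℝ) := by
    rw [hmm, Nat.cast_sub (by omega : q ≤ n - s), Nat.cast_sub (by omega : s ≤ n), hq]
    push_cast; ring
  -- the determinant identity
  have hident : ∀ x : ℝ, (Mq s mm tt pp x).det = φ x := by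
    intro x
    rw [det_Mq, hφ, hcmm, hctt, hcpp]
    ring
  -- real inequalities
  have hSr : (1 : ℝ) ≤ (s : ℝ) := by exact_mod_cast hs₁
  have hpr : (2 : ℝ) ≤ (pp : ℝ) := by exact_mod_cast hpp2
  have htr : (2 : ℝ) ≤ (tt : ℝ) := by exact_mod_cast htt2
  have hmr : (pp : ℝ) ≤ (mm : ℝ) := by exact_mod_cast hmge
  have hu1 : (2 : ℝ) ≤ (mm : ℝ) * (s : ℝ) := by
    have := mul_le_mul (show (2:ℝ) ≤ (mm:ℝ) by linarith) hSr (by norm_num) (by linarith)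
    linarith
  have hw1 : (4 : ℝ) ≤ (tt : ℝ) * (pp : ℝ) * (s : ℝ) := by
    have h1 : (4:ℝ) ≤ (tt:ℝ) * (pp:ℝ) := by
      have := mul_le_mul htr hpr (by norm_num) (by linarith)
      linarith
    have := mul_le_mul h1 hSr (by norm_num) (by linarith)
    linarith
  -- IVT: a root x₀ of the cubic with x₀ ≥ s + mm - 1
  set x₁ : ℝ := (s : ℝ) + (mm : ℝ) - 1 with hx₁
  set X : ℝ := ((s:ℝ)-1) + ((mm:ℝ)-1) + ((pp:ℝ)-1) + (mm:ℝ)*(s:ℝ) + (tt:ℝ)*(pp:ℝ)*(s:ℝ) + 1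
    with hX
  have hgx₁ : (Mq s mm tt pp x₁).det < 0 := by
    rw [det_Mq]
    have : (x₁-((s:ℝ)-1))*((x₁-((mm:ℝ)-1))*(x₁-((pp:ℝ)-1)))
        - (mm:ℝ)*(s:ℝ)*(x₁-((pp:ℝ)-1)) - (tt:ℝ)*(pp:ℝ)*(s:ℝ)*(x₁-((mm:ℝ)-1))
        = -((tt:ℝ)*(pp:ℝ)*(s:ℝ)*(s:ℝ)) := by
      rw [hx₁]; ring
    rw [this]
    have := mul_le_mul hw1 hSr (by norm_num) (by linarith)
    linarith
  have hgX : 0 < (Mq s mm tt pp X).det := by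
    rw [det_Mq]
    have hA : (mm:ℝ)*(s:ℝ) + (tt:ℝ)*(pp:ℝ)*(s:ℝ) + 1 ≤ X - ((s:ℝ)-1) := by
      rw [hX]; linarith
    have hB : (1:ℝ) ≤ X - ((mm:ℝ)-1) := by rw [hX]; linarith
    have hC : (1:ℝ) ≤ X - ((pp:ℝ)-1) := by rw [hX]; linarith
    have hu0 : (0:ℝ) ≤ (mm:ℝ)*(s:ℝ) := by linarith
    have hw0 : (0:ℝ) ≤ (tt:ℝ)*(pp:ℝ)*(s:ℝ) := by linarith
    have k1 : (1:ℝ)*1 ≤ (X - ((mm:ℝ)-1)) * (X - ((pp:ℝ)-1)) :=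
      mul_le_mul hB hC (by norm_num) (by linarith)
    have k2 : ((mm:ℝ)*(s:ℝ) + (tt:ℝ)*(pp:ℝ)*(s:ℝ) + 1) * ((X - ((mm:ℝ)-1)) * (X - ((pp:ℝ)-1)))
        ≤ (X - ((s:ℝ)-1)) * ((X - ((mm:ℝ)-1)) * (X - ((pp:ℝ)-1))) :=
      mul_le_mul_of_nonneg_right hA (by linarith)
    have k3 : (mm:ℝ)*(s:ℝ) * (X - ((pp:ℝ)-1))
        ≤ (mm:ℝ)*(s:ℝ) * ((X - ((mm:ℝ)-1)) * (X - ((pp:ℝ)-1))) :=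
      mul_le_mul_of_nonneg_left (le_mul_of_one_le_left (by linarith) hB) hu0
    have k4 : (tt:ℝ)*(pp:ℝ)*(s:ℝ) * (X - ((mm:ℝ)-1))
        ≤ (tt:ℝ)*(pp:ℝ)*(s:ℝ) * ((X - ((mm:ℝ)-1)) * (X - ((pp:ℝ)-1))) :=
      mul_le_mul_of_nonneg_left (le_mul_of_one_le_right (by linarith) hC) hw0
    have expand : ((mm:ℝ)*(s:ℝ) + (tt:ℝ)*(pp:ℝ)*(s:ℝ) + 1) * ((X - ((mm:ℝ)-1)) * (X - ((pp:ℝ)-1)))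
        = (mm:ℝ)*(s:ℝ) * ((X - ((mm:ℝ)-1)) * (X - ((pp:ℝ)-1)))
          + (tt:ℝ)*(pp:ℝ)*(s:ℝ) * ((X - ((mm:ℝ)-1)) * (X - ((pp:ℝ)-1)))
          + (X - ((mm:ℝ)-1)) * (X - ((pp:ℝ)-1)) := by ring
    linarith [k1, k2, k3, k4, expand]
  have hcont : Continuous fun x : ℝ => (Mq s mm tt pp x).det := by
    simp only [det_Mq]
    fun_prop
  have hx₁X : x₁ ≤ X := by rw [hx₁, hX]; linarith
  obtain ⟨x₀, hx₀mem, hx₀root⟩ :=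
    intermediate_value_Icc hx₁X hcont.continuousOn ⟨le_of_lt hgx₁, le_of_lt hgX⟩
  have hx₀ge : x₁ ≤ x₀ := hx₀mem.1
  -- spectral radius
  letI instD : DecidableRel (gJoin s mm tt pp).Adj := Classical.decRel _
  letI instE : DecidableEq (Fin s ⊕ (Σ i : Fin (tt+1), Fin (bl mm tt pp i))) :=
    Classical.decEq _
  unfold specRad
  set A := (gJoin s mm tt pp).adjMatrix ℝ with hA
  have hfin : (spectrum ℝ A).Finite := A.finite_spectrum
  have hbdd : BddAbove (spectrum ℝ A) := hfin.bddAbove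
  have hx₀spec : x₀ ∈ spectrum ℝ A :=
    lift_eig hs₁ hm1 (le_trans one_le_two htt2) (le_trans one_le_two hpp2) hx₀root
  have hne : (spectrum ℝ A).Nonempty := ⟨x₀, hx₀spec⟩
  have hρmem : sSup (spectrum ℝ A) ∈ spectrum ℝ A := hne.csSup_mem hfin
  have hρge : x₀ ≤ sSup (spectrum ℝ A) := le_csSup hbdd hx₀spec
  have hρgt : (pp : ℝ) - 1 < sSup (spectrum ℝ A) := by
    have : (pp : ℝ) ≤ x₁ := by rw [hx₁]; linarith
    linarith
  constructor
  · rw [← hident]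
    exact eig_quot (ne_of_gt (by linarith)) (ne_of_gt hρgt) hρmem
  · intro x hx
    have hdet : (Mq s mm tt pp x).det = 0 := by rw [hident]; exact hx
    exact le_csSup hbdd (lift_eig hs₁ hm1 (le_trans one_le_two htt2) (le_trans one_le_two hpp2) hdet)
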